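/- Every element g of the structure group G of a finite cycle set can be written as a left fraction g = f h⁻¹ with f, h in the structure monoid, using the rewriting rule s⁻¹ t = (s*t)(t*s)⁻¹ valid in G. -/

import Mathlib

/-- Dehornoy's `Ω` expression: `Omega op k t` is `Ω_{k+1}(t 0, …, t k)`,
defined by `Ω_1(x) = x` and
`Ω_k(x_1,…,x_k) = Ω_{k-1}(x_1,…,x_{k-1}) * Ω_{k-1}(x_1,…,x_{k-2},x_k)`. -/
def Omega {S : Type*} (op : S → S → S) : (k : ℕ) → (Fin (k + 1) → S) → S
  | 0, t => t 0
  | k + 1, t =>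
      op (Omega op k fun i => t i.castSucc)
        (Omega op k fun i =>
          if i = Fin.last k then t (Fin.last (k + 1)) else t i.castSucc)

/-- Dehornoy's `Π` expression: `PiExpr op ι k t = ι(Ω_1(t_1)) ⋯ ι(Ω_k(t_1,…,t_k))`. -/
def PiExpr {S M : Type*} [Monoid M] (op : S → S → S) (ι : S → M) :
    (k : ℕ) → (Fin k → S) → M
  | 0, _ => 1
  | k + 1, t => PiExpr op ι k (fun i => t i.castSucc) * ι (Omega op k t)

/-- The defining relations of the structure monoid: `s (s*t) = t (t*s)`. -/
def csRel {S : Type*} (op : S → S → S) (a b : FreeMonoid S) : Prop :=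
  ∃ s t : S, a = FreeMonoid.of s * FreeMonoid.of (op s t) ∧
    b = FreeMonoid.of t * FreeMonoid.of (op t s)

/-- The structure monoid `⟨S ∣ s(s*t) = t(t*s)⟩⁺` of a cycle set. -/
abbrev StructureMonoid {S : Type*} (op : S → S → S) := (conGen (csRel op)).Quotient

/-- The canonical generators of the structure monoid. -/
def mkM {S : Type*} (op : S → S → S) (s : S) : StructureMonoid op :=
  (conGen (csRel op)).mk' (FreeMonoid.of s)
/-- The defining relators of the structure group: `s (s*t) (t (t*s))⁻¹`. -/
def csGrpRels {S : Type*} (op : S → S → S) : Set (FreeGroup S) :=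
  { r | ∃ s t : S, r = FreeGroup.of s * FreeGroup.of (op s t) *
      (FreeGroup.of t * FreeGroup.of (op t s))⁻¹ }

/-- The structure group `⟨S ∣ s(s*t) = t(t*s)⟩` of a cycle set. -/
abbrev StructureGroup {S : Type*} (op : S → S → S) := PresentedGroup (csGrpRels op)


section Aux
variable {S : Type*} (op : S → S → S)
variable (φ : StructureMonoid op →* StructureGroup op)
  (hφ : ∀ s : S, φ (mkM op s) = PresentedGroup.of (rels := csGrpRels op) s)

theorem grp_rel (s t : S) :
    PresentedGroup.of (rels := csGrpRels op) s * PresentedGroup.of (op s t)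
      = PresentedGroup.of t * PresentedGroup.of (op t s) := by
  have h1 : PresentedGroup.mk (csGrpRels op)
      (FreeGroup.of s * FreeGroup.of (op s t) *
        (FreeGroup.of t * FreeGroup.of (op t s))⁻¹) = 1 := by
    apply (QuotientGroup.eq_one_iff _).mpr
    exact Subgroup.subset_normalClosure ⟨s, t, rfl⟩
  have := h1
  rw [map_mul, map_inv, map_mul, map_mul, mul_inv_eq_one] at this
  exact this

include hφ in
theorem swap_gen (h : StructureMonoid op) (t : S) :
    ∃ a b : StructureMonoid op, (φ h)⁻¹ * φ (mkM op t) = φ a * (φ b)⁻¹ := by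
  induction h using Con.induction_on with
  | H x =>
    induction x using FreeMonoid.inductionOn' generalizing t with
    | one =>
      refine ⟨mkM op t, 1, ?_⟩
      simp only [map_one]
      change (φ 1)⁻¹ * _ = _
      simp
    | of_mul s xs ih =>
      have key : (φ (mkM op s))⁻¹ * φ (mkM op t)
          = φ (mkM op (op s t)) * (φ (mkM op (op t s)))⁻¹ := by
        rw [inv_mul_eq_iff_eq_mul, hφ, hφ, hφ, hφ, ← mul_assoc, grp_rel]; group
      obtain ⟨a, b, hab⟩ := ih (op s t)
      refine ⟨a, mkM op (op t s) * b, ?_⟩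
      have hc : (↑(FreeMonoid.of s * xs) : StructureMonoid op) = mkM op s * ↑xs := rfl
      rw [hc, map_mul, mul_inv_rev, mul_assoc, key, ← mul_assoc, hab, map_mul, mul_inv_rev,
        mul_assoc]

include hφ in
theorem swap_full (h f : StructureMonoid op) :
    ∃ a b : StructureMonoid op, (φ h)⁻¹ * φ f = φ a * (φ b)⁻¹ := by
  induction f using Con.induction_on generalizing h with
  | H x =>
    induction x using FreeMonoid.inductionOn' generalizing h with
    | one =>
      refine ⟨1, h, ?_⟩
      change _ * φ 1 = φ 1 * _
      simp
    | of_mul t xs ih =>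
      obtain ⟨a, b, hab⟩ := swap_gen op φ hφ h t
      obtain ⟨c, d, hcd⟩ := ih b
      refine ⟨a * c, d, ?_⟩
      have hc : (↑(FreeMonoid.of t * xs) : StructureMonoid op) = mkM op t * ↑xs := rfl
      rw [hc, map_mul, ← mul_assoc, hab, mul_assoc, hcd, map_mul, mul_assoc]

end Aux

/-- Every element of the structure group of a finite cycle set is a left fraction
`f h⁻¹` of elements of the structure monoid. -/
theorem left_fraction {S : Type*} [Fintype S] (op : S → S → S)
    (hbij : ∀ s : S, Function.Bijective (op s))
    (hcs : ∀ s t u : S, op (op s t) (op s u) = op (op t s) (op t u))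
    (φ : StructureMonoid op →* StructureGroup op)
    (hφ : ∀ s : S, φ (mkM op s) = PresentedGroup.of (rels := csGrpRels op) s)
    (g : StructureGroup op) :
    ∃ f h : StructureMonoid op, g = φ f * (φ h)⁻¹ := by
  have hmem : g ∈ Subgroup.closure
      (Set.range (PresentedGroup.of : S → StructureGroup op)) := by
    rw [PresentedGroup.closure_range_of]; trivial
  induction hmem using Subgroup.closure_induction with
  | mem x hx =>
    obtain ⟨s, rfl⟩ := hx
    exact ⟨mkM op s, 1, by rw [hφ]; simp⟩
  | one => exact ⟨1, 1, by simp⟩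
  | mul x y _ _ hx hy =>
    obtain ⟨f, h, rfl⟩ := hx
    obtain ⟨f', h', rfl⟩ := hy
    obtain ⟨a, b, hab⟩ := swap_full op φ hφ h f'
    refine ⟨f * a, h' * b, ?_⟩
    calc φ f * (φ h)⁻¹ * (φ f' * (φ h')⁻¹)
        = φ f * ((φ h)⁻¹ * φ f') * (φ h')⁻¹ := by group
      _ = φ (f * a) * (φ (h' * b))⁻¹ := by
          rw [hab, map_mul, map_mul, mul_inv_rev]; group
  | inv x _ hx =>
    obtain ⟨f, h, rfl⟩ := hx
    exact ⟨h, f, by group⟩
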